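/- Let (X, τ, 𝒫) be a compact and tight general space and let R_τ be the specialization preorder of X. Then the topology on X generated by the family {A ∈ 𝒫 : A is an R_τ-upset} (the sets A ∈ 𝒫 such that x ∈ A and x R_τ y imply y ∈ A) is equal to τ. -/

import Mathlib

open Set TopologicalSpace

lemma sInter_aux {X : Type*} [t : TopologicalSpace X] (P : Set (Set X))
    (huniv : (univ : Set X) ∈ P)
    (hunion : ∀ A ∈ P, ∀ B ∈ P, A ∪ B ∈ P)
    (hcompl : ∀ A ∈ P, Aᶜ ∈ P) :
    ∀ G : Set (Set X), G.Finite → G ⊆ {U | U ∈ P ∧ IsOpen U} →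
      ⋂₀ G ∈ P ∧ IsOpen (⋂₀ G) := by
  intro G hGfin
  refine Set.Finite.induction_on G hGfin ?_ ?_
  · intro _; rw [sInter_empty]; exact ⟨huniv, isOpen_univ⟩
  · rintro a s ha hfin ih hsub
    have ha' : a ∈ P ∧ IsOpen a := hsub (mem_insert _ _)
    have hs := ih (fun x hx => hsub (mem_insert_of_mem _ hx))
    rw [sInter_insert]
    constructor
    · have : a ∩ ⋂₀ s = (aᶜ ∪ (⋂₀ s)ᶜ)ᶜ := by
        rw [Set.compl_union, compl_compl, compl_compl]
      rw [this]
      exact hcompl _ (hunion _ (hcompl _ ha'.1) _ (hcompl _ hs.1))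
    · exact ha'.2.inter hs.2

/-- Let `(X, τ, 𝒫)` be a compact and tight general space and let `R_τ` be the
specialization preorder of `X` (`x R_τ y` iff `x ∈ closure {y}`). Then the topology generated by
the family of those `A ∈ 𝒫` that are `R_τ`-upsets equals `τ`. -/
theorem statement3 {X : Type*} [t : TopologicalSpace X] (P : Set (Set X))
    (hempty : (∅ : Set X) ∈ P) (huniv : (univ : Set X) ∈ P)
    (hunion : ∀ A ∈ P, ∀ B ∈ P, A ∪ B ∈ P)
    (hcompl : ∀ A ∈ P, Aᶜ ∈ P)
    (hclosure : ∀ A ∈ P, closure A ∈ P)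
    (hcompact : ∀ F ⊆ P, (∀ G ⊆ F, G.Finite → (⋂₀ G).Nonempty) → (⋂₀ F).Nonempty)
    (htight : IsTopologicalBasis {A | A ∈ P ∧ IsOpen A}) :
    generateFrom {A | A ∈ P ∧ ∀ x ∈ A, ∀ y : X, x ∈ closure {y} → y ∈ A} = t := by
  apply le_antisymm
  · -- open sets of t are generated: basis sets are upsets
    have hsub : {A | A ∈ P ∧ IsOpen A} ⊆
        {A | A ∈ P ∧ ∀ x ∈ A, ∀ y : X, x ∈ closure {y} → y ∈ A} := by
      rintro A ⟨hAP, hAopen⟩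
      refine ⟨hAP, fun x hx y hxy => ?_⟩
      rcases mem_closure_iff.mp hxy A hAopen hx with ⟨z, hz1, hz2⟩
      simp only [mem_singleton_iff] at hz2
      rwa [← hz2]
    calc generateFrom {A | A ∈ P ∧ ∀ x ∈ A, ∀ y : X, x ∈ closure {y} → y ∈ A}
        ≤ generateFrom {A | A ∈ P ∧ IsOpen A} := generateFrom_anti hsub
      _ = t := htight.eq_generateFrom.symm
  · -- every upset in P is open
    apply le_generateFrom
    rintro A ⟨hAP, hAup⟩
    rw [isOpen_iff_forall_mem_open]
    intro x hx
    by_contra hcon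
    push_neg at hcon
    -- build the family F
    set F : Set (Set X) := insert Aᶜ {U | U ∈ P ∧ IsOpen U ∧ x ∈ U} with hF
    have hFP : F ⊆ P := by
      rintro U (rfl | ⟨hU, _, _⟩)
      · exact hcompl _ hAP
      · exact hU
    have hFIP : ∀ G ⊆ F, G.Finite → (⋂₀ G).Nonempty := by
      intro G hGF hGfin
      have hG' : G \ {Aᶜ} ⊆ {U | U ∈ P ∧ IsOpen U ∧ x ∈ U} := by
        rintro U ⟨hUG, hUne⟩
        rcases hGF hUG with rfl | h
        · exact absurd rfl hUne
        · exact h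
      have hG'' := sInter_aux P huniv hunion hcompl (G \ {Aᶜ}) (hGfin.diff)
        (fun U hU => ⟨(hG' hU).1, (hG' hU).2.1⟩)
      have hxG : x ∈ ⋂₀ (G \ {Aᶜ}) := by
        intro U hU; exact (hG' hU).2.2
      -- the open set ⋂₀ (G \ {Aᶜ}) is in P, open, contains x, so not ⊆ A
      have hnot : ¬ (⋂₀ (G \ {Aᶜ}) ⊆ A) := by
        intro hsub'
        exact hcon (⋂₀ (G \ {Aᶜ})) hsub' hG''.2 hxG
      rcases not_subset.mp hnot with ⟨z, hz1, hz2⟩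
      refine ⟨z, fun U hU => ?_⟩
      by_cases hUA : U = Aᶜ
      · rw [hUA]; exact hz2
      · exact hz1 U ⟨hU, hUA⟩
    rcases hcompact F hFP hFIP with ⟨z, hz⟩
    have hzA : z ∉ A := hz Aᶜ (mem_insert _ _)
    -- every open set containing x contains z
    have hclo : x ∈ closure {z} := by
      rw [mem_closure_iff]
      intro V hV hxV
      rcases htight.exists_subset_of_mem_open hxV hV with ⟨B, ⟨hBP, hBopen⟩, hxB, hBV⟩
      refine ⟨z, mem_inter ?_ rfl⟩
      exact hBV (hz B (mem_insert_of_mem _ ⟨hBP, hBopen, hxB⟩))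
    exact hzA (hAup x hx z hclo)
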